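/- Path iteration bound: define a map on ℕ⁴-exponent bounds corresponding to Rule 1, where each application increases Φ by at least 1 (Φ(x) = 2(x₁+x₂+x₃) − |{s : x_s > x₀}|). Since 0 ≤ |{s : x_s > x₀}| ≤ 3 always, applying the Rule-1 step k times to a vector bounded below by (φ^{e_s})_s yields a vector bounded below by some (φ^{f_s})_s with Ψ(f) ≥ Ψ(e) + max(k − 3, 0). -/

import Mathlib

noncomputable def goldenRatio' : ℝ := (1 + Real.sqrt 5) / 2

/-- Ψ(x) = 2(x₁ + x₂ + x₃) for an exponent vector x ∈ ℕ⁴. -/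
def Psi (x : Fin 4 → ℕ) : ℕ := 2 * (x 1 + x 2 + x 3)

/-- Φ(x) = Ψ(x) − |{s ∈ {1,2,3} : x_s > x₀}| for an exponent vector x ∈ ℕ⁴. -/
def Phi (x : Fin 4 → ℕ) : ℤ :=
  (Psi x : ℤ) - (({1, 2, 3} : Finset (Fin 4)).filter fun s => x 0 < x s).card

/-- One (nondeterministic) Rule-1 step on transfer vectors. -/
def Rule1Step (x y : Fin 4 → ℝ) : Prop :=
  y = ![x 1, x 0 + x 1, x 3, x 2] ∨
  y = ![x 1, x 3, x 2, x 0 + x 1] ∨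
  y = ![x 1, x 2, x 0 + x 1, x 3]

lemma sqrt5_ge_two : (2 : ℝ) ≤ Real.sqrt 5 := by
  rw [show (2:ℝ) = Real.sqrt 4 by rw [show (4:ℝ) = 2^2 by norm_num, Real.sqrt_sq] ; norm_num]
  exact Real.sqrt_le_sqrt (by norm_num)

lemma sqrt5_le_three : Real.sqrt 5 ≤ 3 := by
  rw [show (3:ℝ) = Real.sqrt 9 by rw [show (9:ℝ) = 3^2 by norm_num, Real.sqrt_sq] ; norm_num]
  exact Real.sqrt_le_sqrt (by norm_num)

lemma one_le_gold' : 1 ≤ goldenRatio' := by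
  have := sqrt5_ge_two; unfold goldenRatio'; linarith

lemma gold'_pos : 0 < goldenRatio' := lt_of_lt_of_le one_pos one_le_gold'

lemma gold'_le_two : goldenRatio' ≤ 2 := by
  have := sqrt5_le_three; unfold goldenRatio'; linarith

lemma gold'_sq : goldenRatio' ^ 2 = goldenRatio' + 1 := by
  have h : Real.sqrt 5 ^ 2 = 5 := Real.sq_sqrt (by norm_num)
  unfold goldenRatio'; ring_nf; nlinarith [h]

/-- Combined exponent for the sum `φ^a + φ^b`. -/
def Gexp (a b : ℕ) : ℕ := if a < b then b else if a ≤ b + 1 then a + 1 else a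

lemma gold_pow_Gexp (a b : ℕ) :
    goldenRatio' ^ Gexp a b ≤ goldenRatio' ^ a + goldenRatio' ^ b := by
  have hpos : ∀ n : ℕ, (0:ℝ) < goldenRatio' ^ n := fun n => pow_pos gold'_pos n
  have hmono : ∀ {m n : ℕ}, m ≤ n → goldenRatio' ^ m ≤ goldenRatio' ^ n :=
    fun h => pow_le_pow_right₀ one_le_gold' h
  unfold Gexp
  split_ifs with h1 h2
  · nlinarith [hpos a]
  · -- b ≤ a ≤ b + 1, need φ^(a+1) ≤ φ^a + φ^b
    rcases Nat.eq_zero_or_pos a with ha | ha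
    · subst ha
      have hb : b = 0 := by omega
      subst hb
      have := gold'_le_two
      simp only [zero_add, pow_one, pow_zero]
      linarith
    · obtain ⟨c, rfl⟩ := Nat.exists_eq_add_of_le ha
      have hc : c ≤ b := by omega
      have key : goldenRatio' ^ (1 + c + 1) = goldenRatio' ^ (1 + c) + goldenRatio' ^ c := by
        have : goldenRatio' ^ (1 + c + 1) = goldenRatio' ^ 2 * goldenRatio' ^ c := by ring
        rw [this, gold'_sq]; ring
      rw [key]
      have := hmono hc
      linarith
  · nlinarith [hpos b]

lemma Phi_eq (x : Fin 4 → ℕ) : Phi x = 2*((x 1 : ℤ) + x 2 + x 3) -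
    ((if x 0 < x 1 then 1 else 0) + (if x 0 < x 2 then 1 else 0) +
      (if x 0 < x 3 then 1 else 0)) := by
  simp [Phi, Psi, Finset.filter_insert, Finset.filter_singleton]
  split_ifs <;> simp

lemma Phi_le_Psi (x : Fin 4 → ℕ) : Phi x ≤ (Psi x : ℤ) := by
  have : (0:ℤ) ≤ (({1, 2, 3} : Finset (Fin 4)).filter fun s => x 0 < x s).card :=
    Int.ofNat_nonneg _
  unfold Phi; linarith

lemma Psi_le_Phi_add (x : Fin 4 → ℕ) : (Psi x : ℤ) - 3 ≤ Phi x := by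
  have h := Finset.card_filter_le ({1, 2, 3} : Finset (Fin 4)) (fun s => x 0 < x s)
  have h3 : ({1, 2, 3} : Finset (Fin 4)).card = 3 := by decide
  rw [h3] at h
  unfold Phi
  have : ((({1, 2, 3} : Finset (Fin 4)).filter fun s => x 0 < x s).card : ℤ) ≤ 3 := by
    exact_mod_cast h
  linarith

lemma Gexp_ge (a b : ℕ) : b ≤ Gexp a b := by
  unfold Gexp; split_ifs <;> omega

lemma arith_key (a b c d : ℕ) :
    2*((b:ℤ) + c + d) -
      ((if a < b then 1 else 0) + (if a < c then 1 else 0) + (if a < d then 1 else 0)) + 1 ≤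
    2*((Gexp a b : ℤ) + d + c) -
      ((if b < Gexp a b then 1 else 0) + (if b < d then 1 else 0) + (if b < c then 1 else 0)) := by
  unfold Gexp
  split_ifs <;> push_cast <;> omega

lemma key_step (x : Fin 4 → ℕ) (u v : Fin 4 → ℝ)
    (hu : ∀ i, goldenRatio' ^ x i ≤ u i) (h : Rule1Step u v) :
    ∃ g : Fin 4 → ℕ, (∀ i, goldenRatio' ^ g i ≤ v i) ∧ Phi x + 1 ≤ Phi g ∧
      Psi x ≤ Psi g := by
  have hsum : goldenRatio' ^ Gexp (x 0) (x 1) ≤ u 0 + u 1 :=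
    le_trans (gold_pow_Gexp (x 0) (x 1)) (add_le_add (hu 0) (hu 1))
  have hG := Gexp_ge (x 0) (x 1)
  rcases h with h | h | h
  · refine ⟨![x 1, Gexp (x 0) (x 1), x 3, x 2], ?_, ?_, ?_⟩
    · intro i
      fin_cases i <;> simp [h] <;> [exact hu 1; exact hsum; exact hu 3; exact hu 2]
    · rw [Phi_eq, Phi_eq]
      have := arith_key (x 0) (x 1) (x 2) (x 3)
      simp only [Matrix.cons_val_zero, Matrix.cons_val_one, Matrix.head_cons,
        Matrix.cons_val_two, Matrix.tail_cons, Matrix.cons_val_three]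
      omega
    · simp [Psi]; omega
  · refine ⟨![x 1, x 3, x 2, Gexp (x 0) (x 1)], ?_, ?_, ?_⟩
    · intro i
      fin_cases i <;> simp [h] <;> [exact hu 1; exact hu 3; exact hu 2; exact hsum]
    · rw [Phi_eq, Phi_eq]
      have := arith_key (x 0) (x 1) (x 2) (x 3)
      simp only [Matrix.cons_val_zero, Matrix.cons_val_one, Matrix.head_cons,
        Matrix.cons_val_two, Matrix.tail_cons, Matrix.cons_val_three]
      omega
    · simp [Psi]; omega
  · refine ⟨![x 1, x 2, Gexp (x 0) (x 1), x 3], ?_, ?_, ?_⟩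
    · intro i
      fin_cases i <;> simp [h] <;> [exact hu 1; exact hu 2; exact hsum; exact hu 3]
    · rw [Phi_eq, Phi_eq]
      have := arith_key (x 0) (x 1) (x 2) (x 3)
      simp only [Matrix.cons_val_zero, Matrix.cons_val_one, Matrix.head_cons,
        Matrix.cons_val_two, Matrix.tail_cons, Matrix.cons_val_three]
      omega
    · simp [Psi]; omega

theorem rule1_path_iteration (k : ℕ) (u : ℕ → Fin 4 → ℝ) (e : Fin 4 → ℕ)
    (h0 : ∀ i, goldenRatio' ^ e i ≤ u 0 i)
    (hstep : ∀ j < k, Rule1Step (u j) (u (j + 1))) :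
    ∃ f : Fin 4 → ℕ,
      (∀ i, goldenRatio' ^ f i ≤ u k i) ∧ Psi e + (k - 3) ≤ Psi f := by
  have main : ∀ j ≤ k, ∃ f : Fin 4 → ℕ,
      (∀ i, goldenRatio' ^ f i ≤ u j i) ∧ Phi e + j ≤ Phi f ∧ Psi e ≤ Psi f := by
    intro j
    induction j with
    | zero => exact fun _ => ⟨e, h0, by simp, le_rfl⟩
    | succ n ih =>
      intro hn
      obtain ⟨f, hf, hPhi, hPsi⟩ := ih (by omega)
      obtain ⟨g, hg, hPhi', hPsi'⟩ := key_step f (u n) (u (n+1)) hf (hstep n (by omega))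
      exact ⟨g, hg, by push_cast; push_cast at hPhi; linarith, le_trans hPsi hPsi'⟩
  obtain ⟨f, hf, hPhi, hPsi⟩ := main k le_rfl
  refine ⟨f, hf, ?_⟩
  have h1 := Phi_le_Psi f
  have h2 := Psi_le_Phi_add e
  have : (Psi e : ℤ) - 3 + k ≤ (Psi f : ℤ) := by linarith
  omega
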